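/- Let q^{-1}-Hermite polynomials h_n(x|q) satisfy 2x h_n = h_{n+1} + q^{-n}(1-q^n) h_{n-1} with h_0 = 1, h_1 = 2x, and set x_n(t) = (q^{-n/2} t - q^{n/2}/t)/2, p_n(t) = t^{-n} q^{n^2/2} h_n(x_n(t)|q). Then (1 - q^n/t^2) p_n(t) = p_{n+1}(q^{1/2} t) + (1-q^n) t^{-2} p_{n-1}(q^{-1/2} t) for all n \geq 0 and t \neq 0. -/

import Mathlib

/-- The `q⁻¹`-Hermite polynomials `h_n(x|q)` of Askey, Ismail and Masson:
`h_0 = 1`, `h_1 = 2x`, and `2x h_{n+1} = h_{n+2} + q^{-(n+1)}(1-q^{n+1}) h_n`. -/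
noncomputable def qInvHermite (q : ℝ) : ℕ → ℂ → ℂ
  | 0 => fun _ => 1
  | 1 => fun x => 2 * x
  | (n + 2) => fun x =>
      2 * x * qInvHermite q (n + 1) x
        - ((q : ℂ) ^ (n + 1))⁻¹ * (1 - (q : ℂ) ^ (n + 1)) * qInvHermite q n x

/-- The scaling `x_n(t) = (q^{-n/2} t - q^{n/2}/t)/2`. -/
noncomputable def xScale (q : ℝ) (n : ℕ) (t : ℂ) : ℂ :=
  (((Real.sqrt q : ℂ) ^ n)⁻¹ * t - (Real.sqrt q : ℂ) ^ n / t) / 2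

/-- The renormalized polynomials `p_n(t) = t^{-n} q^{n²/2} h_n(x_n(t)|q)`. -/
noncomputable def pFun (q : ℝ) (n : ℕ) (t : ℂ) : ℂ :=
  (t ^ n)⁻¹ * (Real.sqrt q : ℂ) ^ (n ^ 2) * qInvHermite q n (xScale q n t)

private lemma xscale_aux (s t : ℂ) (hs0 : s ≠ 0) (ht : t ≠ 0) (m : ℕ) :
    ((s ^ (m + 1))⁻¹ * (s * t) - s ^ (m + 1) / (s * t)) / 2
      = ((s ^ m)⁻¹ * t - s ^ m / t) / 2 := by
  have h1 : (s ^ (m + 1))⁻¹ * (s * t) = (s ^ m)⁻¹ * t := by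
    rw [pow_succ, mul_inv]
    calc (s ^ m)⁻¹ * s⁻¹ * (s * t) = (s ^ m)⁻¹ * t * (s⁻¹ * s) := by ring
    _ = (s ^ m)⁻¹ * t := by rw [inv_mul_cancel₀ hs0, mul_one]
  have h2 : s ^ (m + 1) / (s * t) = s ^ m / t := by
    rw [div_eq_div_iff (mul_ne_zero hs0 ht) ht, pow_succ]; ring
  rw [h1, h2]

/-- the renormalized `q⁻¹`-Hermite polynomials satisfy
`(1 - qⁿ/t²) p_n(t) = p_{n+1}(q^{1/2} t) + (1-qⁿ) t^{-2} p_{n-1}(q^{-1/2} t)`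
for all `n ≥ 0` and `t ≠ 0` (at `n = 0` the last term has coefficient `0`). -/
theorem pFun_recurrence (q : ℝ) (hq0 : 0 < q) (hq1 : q < 1) (n : ℕ) (t : ℂ) (ht : t ≠ 0) :
    (1 - (q : ℂ) ^ n / t ^ 2) * pFun q n t
      = pFun q (n + 1) ((Real.sqrt q : ℂ) * t)
        + (1 - (q : ℂ) ^ n) / t ^ 2 * pFun q (n - 1) (((Real.sqrt q : ℂ))⁻¹ * t) := by
  have hq : (q : ℂ) ≠ 0 := by exact_mod_cast hq0.ne'
  set s : ℂ := (Real.sqrt q : ℂ) with hs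
  have hs2 : s ^ 2 = (q : ℂ) := by
    rw [hs]; norm_cast; exact Real.sq_sqrt hq0.le
  have hs0 : s ≠ 0 := by
    intro h; rw [h] at hs2; simp at hs2; exact hq hs2.symm
  clear_value s
  match n with
  | 0 =>
      simp only [pFun, qInvHermite, xScale, pow_zero, pow_one, Nat.zero_sub, ← hs]
      field_simp
      ring
  | (m + 1) =>
      have hx1 : xScale q (m + 2) (s * t) = xScale q (m + 1) t := by
        unfold xScale; rw [← hs]; exact xscale_aux s t hs0 ht (m + 1)
      have hx2 : xScale q m (s⁻¹ * t) = xScale q (m + 1) t := by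
        unfold xScale; rw [← hs]
        have hst : s * (s⁻¹ * t) = t := by
          rw [← mul_assoc, mul_inv_cancel₀ hs0, one_mul]
        have h := xscale_aux s (s⁻¹ * t) hs0 (mul_ne_zero (inv_ne_zero hs0) ht) m
        rw [hst] at h
        exact h.symm
      simp only [Nat.add_sub_cancel, pFun, hx1, hx2]
      simp only [qInvHermite]
      rw [← hs2]
      set A := qInvHermite q (m + 1) (xScale q (m + 1) t) with hA
      set B := qInvHermite q m (xScale q (m + 1) t) with hB
      have hc : ((s ^ 2)) ^ m = (s ^ m) ^ 2 := by
        rw [← pow_mul, mul_comm, pow_mul]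
      simp only [xScale, ← hs,
        show (m + 2) ^ 2 = m ^ 2 + (m * 4 + 4) from by ring,
        show (m + 1) ^ 2 = m ^ 2 + (m * 2 + 1) from by ring,
        mul_pow, inv_pow, pow_add, pow_mul, pow_succ, pow_zero, one_mul, pow_one, hc]
      have ha0 : s ^ m ≠ 0 := pow_ne_zero _ hs0
      have hb0 : t ^ m ≠ 0 := pow_ne_zero _ ht
      have hu0 : s ^ m ^ 2 ≠ 0 := pow_ne_zero _ hs0
      generalize s ^ m ^ 2 = u at *
      generalize s ^ m = a at *
      generalize t ^ m = b at *
      field_simp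
      have hD : (a * b * (s * t) * (s * t) * (a * s * t * 2 * (a * a * (s * s))) : ℂ) ≠ 0 := by
        simp [ha0, hb0, hs0, ht]
      ring
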